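/- Let f : ℝ^n → ℝ^m and x ∈ ℝ^n, and suppose f is bounded on some closed ball centered at x of positive radius. Then ⋂_{δ>0} cl(co(f(cl(B(x,δ))))) = co({ y ∈ ℝ^m : there exists a sequence (x_b)_{b∈ℕ} in ℝ^n with x_b → x and f(x_b) → y }), where B(x,δ) is the open ball of radius δ centered at x. -/

import Mathlib

open Set Function

lemma sum_extend_emb {ι M : Type*} {N : ℕ} [Fintype ι] [AddCommMonoid M]
    (ψ : ι ↪ Fin N) (g : ι → M) :
    ∑ i : Fin N, Function.extend ψ g 0 i = ∑ j, g j := by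
  classical
  have h1 : ∑ i ∈ (Finset.univ.map ψ), Function.extend ψ g 0 i = ∑ j, g j := by
    rw [Finset.sum_map]
    exact Finset.sum_congr rfl fun j _ => ψ.injective.extend_apply g 0 j
  rw [← h1]
  refine (Finset.sum_subset (Finset.subset_univ _) fun i _ hi => ?_).symm
  have hne : ¬∃ j, ψ j = i := by
    rintro ⟨j, rfl⟩
    exact hi (Finset.mem_map_of_mem ψ (Finset.mem_univ j))
  rw [Function.extend_apply' _ _ _ hne]
  rfl

lemma isCompact_convexHull_aux {m : ℕ} {s : Set (EuclideanSpace ℝ (Fin m))}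
    (hs : IsCompact s) : IsCompact (convexHull ℝ s) := by
  classical
  rcases s.eq_empty_or_nonempty with rfl | ⟨y₀, hy₀⟩
  · simp
  have hK : IsCompact ((stdSimplex ℝ (Fin (m + 1))) ×ˢ
      (Set.univ.pi fun _ : Fin (m + 1) => s)) :=
    (isCompact_stdSimplex ℝ _).prod (isCompact_univ_pi fun _ => hs)
  have hg : Continuous (fun p : (Fin (m + 1) → ℝ) × (Fin (m + 1) → EuclideanSpace ℝ (Fin m)) =>
      ∑ i, p.1 i • p.2 i) :=
    continuous_finset_sum _ fun i _ =>
      ((continuous_apply i).comp continuous_fst).smul ((continuous_apply i).comp continuous_snd)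
  have himg : convexHull ℝ s
      = (fun p : (Fin (m + 1) → ℝ) × (Fin (m + 1) → EuclideanSpace ℝ (Fin m)) =>
          ∑ i, p.1 i • p.2 i) ''
        ((stdSimplex ℝ (Fin (m + 1))) ×ˢ (Set.univ.pi fun _ : Fin (m + 1) => s)) := by
    apply Subset.antisymm
    · intro x hx
      obtain ⟨ι, hι, z, w, hzs, hai, hw0, hw1, hwz⟩ :=
        eq_pos_convex_span_of_mem_convexHull hx
      letI := hι
      haveI : Nonempty ι := by
        by_contra h
        rw [not_nonempty_iff] at h
        rw [Finset.univ_eq_empty, Finset.sum_empty] at hw1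
        exact zero_ne_one hw1
      have hcard : Fintype.card ι ≤ m + 1 := by
        have h1 := hai.finrank_vectorSpan_add_one
        have hle : Module.finrank ℝ (vectorSpan ℝ (Set.range z)) ≤
            Module.finrank ℝ (EuclideanSpace ℝ (Fin m)) := Submodule.finrank_le _
        have hE : Module.finrank ℝ (EuclideanSpace ℝ (Fin m)) = m := finrank_euclideanSpace_fin
        omega
      obtain ⟨ψ⟩ : Nonempty (ι ↪ Fin (m + 1)) :=
        Function.Embedding.nonempty_of_card_le (by simpa using hcard)
      have hWpos : ∀ i, 0 ≤ Function.extend ψ w 0 i := by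
        intro i
        by_cases h : ∃ j, ψ j = i
        · obtain ⟨j, rfl⟩ := h
          rw [ψ.injective.extend_apply]
          exact (hw0 j).le
        · rw [Function.extend_apply' _ _ _ h]
          exact le_refl _
      have hWsum : ∑ i, Function.extend ψ w 0 i = 1 := by
        rw [sum_extend_emb ψ w, hw1]
      have hZmem : ∀ i, Function.extend ψ z (fun _ => y₀) i ∈ s := by
        intro i
        by_cases h : ∃ j, ψ j = i
        · obtain ⟨j, rfl⟩ := h
          rw [ψ.injective.extend_apply]
          exact hzs (Set.mem_range_self j)
        · rw [Function.extend_apply' _ _ _ h]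
          exact hy₀
      have hsum : ∑ i : Fin (m + 1),
          Function.extend ψ w 0 i • Function.extend ψ z (fun _ => y₀) i = x := by
        have hWZ : ∀ i : Fin (m + 1),
            Function.extend ψ w 0 i • Function.extend ψ z (fun _ => y₀) i
              = Function.extend ψ (fun j => w j • z j) 0 i := by
          intro i
          by_cases h : ∃ j, ψ j = i
          · obtain ⟨j, rfl⟩ := h
            rw [ψ.injective.extend_apply, ψ.injective.extend_apply, ψ.injective.extend_apply]
          · rw [Function.extend_apply' _ _ _ h, Function.extend_apply' _ _ _ h,
              Function.extend_apply' _ _ _ h]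
            simp
        calc ∑ i : Fin (m + 1),
            Function.extend ψ w 0 i • Function.extend ψ z (fun _ => y₀) i
            = ∑ i, Function.extend ψ (fun j => w j • z j) 0 i :=
              Finset.sum_congr rfl fun i _ => hWZ i
          _ = ∑ j, w j • z j := sum_extend_emb ψ _
          _ = x := hwz
      exact ⟨(Function.extend ψ w 0, Function.extend ψ z fun _ => y₀),
        Set.mem_prod.mpr ⟨⟨hWpos, hWsum⟩, Set.mem_univ_pi.mpr hZmem⟩, hsum⟩
    · rintro x ⟨⟨w, z⟩, hmem, rfl⟩
      obtain ⟨⟨hw0, hw1⟩, hz⟩ := Set.mem_prod.mp hmem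
      exact mem_convexHull_of_exists_fintype w z hw0 hw1
        (fun i => Set.mem_univ_pi.mp hz i) rfl
  rw [himg]
  exact hK.image hg

open Filter Topology Set

theorem stmt17 (n m : ℕ)
    (f : EuclideanSpace ℝ (Fin n) → EuclideanSpace ℝ (Fin m))
    (x : EuclideanSpace ℝ (Fin n)) (r : ℝ) (hr : 0 < r)
    (hb : Bornology.IsBounded (f '' Metric.closedBall x r)) :
    ⋂ δ > (0 : ℝ), closure (convexHull ℝ (f '' closure (Metric.ball x δ))) =
      convexHull ℝ {y : EuclideanSpace ℝ (Fin m) |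
        ∃ xb : ℕ → EuclideanSpace ℝ (Fin n),
          Tendsto xb atTop (𝓝 x) ∧ Tendsto (fun b => f (xb b)) atTop (𝓝 y)} := by
  classical
  set D : Set (EuclideanSpace ℝ (Fin m)) := {y | ∃ xb : ℕ → EuclideanSpace ℝ (Fin n),
    Tendsto xb atTop (𝓝 x) ∧ Tendsto (fun b => f (xb b)) atTop (𝓝 y)} with hD
  set C : ℝ → Set (EuclideanSpace ℝ (Fin m)) :=
    fun δ => closure (f '' Metric.closedBall x δ) with hC
  have hCmono : ∀ a b : ℝ, a ≤ b → C a ⊆ C b := fun a b hab =>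
    closure_mono (Set.image_mono (Metric.closedBall_subset_closedBall hab))
  have hCr : IsCompact (C r) :=
    Metric.isCompact_of_isClosed_isBounded isClosed_closure hb.closure
  have hδk : ∀ k : ℕ, 0 < r / (k + 1) := fun k => by positivity
  have hδkr : ∀ k : ℕ, r / (k + 1) ≤ r := by
    intro k
    rw [div_le_iff₀ (by positivity)]
    nlinarith [Nat.cast_nonneg (α := ℝ) k]
  -- D is contained in each C δ
  have hD_sub : ∀ δ : ℝ, 0 < δ → D ⊆ C δ := by
    intro δ hδ y hy
    obtain ⟨xb, hx1, hx2⟩ := hy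
    refine mem_closure_of_tendsto hx2 ?_
    have hev : ∀ᶠ b in atTop, xb b ∈ Metric.ball x δ := hx1 (Metric.ball_mem_nhds x hδ)
    exact hev.mono fun b hbmem =>
      Set.mem_image_of_mem f (Metric.ball_subset_closedBall hbmem)
  -- points in all C (r/(k+1)) are in D
  have hseq : ∀ w, (∀ k : ℕ, w ∈ C (r / (k + 1))) → w ∈ D := by
    intro w hw
    have H : ∀ b : ℕ, ∃ p, p ∈ Metric.closedBall x (r / (b + 1)) ∧
        dist w (f p) < 1 / (b + 1) := by
      intro b
      obtain ⟨z, hz, hd⟩ := Metric.mem_closure_iff.mp (hw b) (1 / (b + 1)) (by positivity)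
      obtain ⟨p, hp, rfl⟩ := hz
      exact ⟨p, hp, hd⟩
    choose xb hxb hfb using H
    have h0 : Tendsto (fun b : ℕ => 1 / ((b : ℝ) + 1)) atTop (𝓝 0) :=
      tendsto_one_div_add_atTop_nhds_zero_nat
    refine ⟨xb, ?_, ?_⟩
    · rw [tendsto_iff_dist_tendsto_zero]
      refine squeeze_zero (g := fun b : ℕ => r / ((b : ℝ) + 1)) (fun b => dist_nonneg)
        (fun b => Metric.mem_closedBall.mp (hxb b)) ?_
      have := h0.const_mul r
      simpa [div_eq_mul_one_div r] using this
    · rw [tendsto_iff_dist_tendsto_zero]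
      refine squeeze_zero (g := fun b : ℕ => 1 / ((b : ℝ) + 1)) (fun b => dist_nonneg)
        (fun b => ?_) h0
      rw [dist_comm]
      exact (hfb b).le
  have hDeq : D = ⋂ k : ℕ, C (r / (k + 1)) := by
    apply Set.Subset.antisymm
    · exact Set.subset_iInter fun k => hD_sub _ (hδk k)
    · exact fun w hw => hseq w fun k => Set.mem_iInter.mp hw k
  have hDcompact : IsCompact D := by
    rw [hDeq]
    refine IsCompact.of_isClosed_subset hCr (isClosed_iInter fun k => isClosed_closure) ?_
    exact (Set.iInter_subset _ 0).trans (hCmono _ _ (hδkr 0))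
  have hCb : ∀ δ : ℝ, 0 < δ → closure (Metric.ball x δ) = Metric.closedBall x δ :=
    fun δ hδ => closure_ball x hδ.ne'
  apply Set.Subset.antisymm
  · -- ⊆ : intersection is inside convex hull of D
    intro y hy
    have hy' : ∀ δ : ℝ, 0 < δ → y ∈ closure (convexHull ℝ (f '' Metric.closedBall x δ)) := by
      intro δ hδ
      have := Set.mem_iInter₂.mp hy δ hδ
      rwa [hCb δ hδ] at this
    by_contra hyD
    obtain ⟨φ, u, hu1, hu2⟩ := geometric_hahn_banach_closed_point
      (convex_convexHull ℝ D) (isCompact_convexHull_aux hDcompact).isClosed hyD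
    by_cases hδ0 : ∃ δ : ℝ, 0 < δ ∧ ∀ z ∈ C δ, φ z < u
    · obtain ⟨δ0, hδ0pos, hlt⟩ := hδ0
      have h1 : convexHull ℝ (f '' Metric.closedBall x δ0) ⊆ {z | φ z < u} :=
        convexHull_min (fun z hz => hlt z (subset_closure hz))
          (convex_halfSpace_lt ⟨φ.map_add, φ.map_smul⟩ u)
      have h2 : y ∈ closure {z | φ z < u} := closure_mono h1 (hy' δ0 hδ0pos)
      have h3 : y ∈ {z | φ z ≤ u} := closure_minimal (fun z hz => le_of_lt hz)
        (isClosed_le φ.continuous continuous_const) h2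
      exact absurd h3 (not_le.mpr hu2)
    · push_neg at hδ0
      set t : ℕ → Set (EuclideanSpace ℝ (Fin m)) :=
        fun k => C (r / (k + 1)) ∩ {z | u ≤ φ z} with ht
      have hsub : ∀ k : ℕ, t (k + 1) ⊆ t k := by
        intro k
        apply Set.inter_subset_inter_left
        apply hCmono
        apply div_le_div_of_nonneg_left hr.le (by positivity)
        push_cast
        linarith
      have hne : ∀ k : ℕ, (t k).Nonempty := by
        intro k
        obtain ⟨z, hz1, hz2⟩ := hδ0 (r / (k + 1)) (hδk k)
        exact ⟨z, hz1, hz2⟩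
      have hcl : ∀ k : ℕ, IsClosed (t k) := fun k =>
        isClosed_closure.inter (isClosed_le continuous_const φ.continuous)
      have ht0 : IsCompact (t 0) :=
        IsCompact.of_isClosed_subset hCr (hcl 0)
          ((Set.inter_subset_left).trans (hCmono _ _ (hδkr 0)))
      obtain ⟨w, hw⟩ := IsCompact.nonempty_iInter_of_sequence_nonempty_isCompact_isClosed
        t hsub hne ht0 hcl
      have hwD : w ∈ D := hseq w fun k => (Set.mem_iInter.mp hw k).1
      have hwu : u ≤ φ w := (Set.mem_iInter.mp hw 0).2
      have := hu1 w (subset_convexHull ℝ D hwD)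
      linarith
  · -- ⊇ : convex hull of D is inside each closed convex set
    refine Set.subset_iInter₂ fun δ hδ => ?_
    rw [hCb δ hδ]
    apply convexHull_min
    · exact fun y hy => closure_mono (convexHull_mono (fun z hz => hz)) <|
        (closure_mono (subset_convexHull ℝ _)) (hD_sub δ hδ hy)
    · exact (convex_convexHull ℝ _).closure
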